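/- Let (G,X) be a minimal topological dynamical system and let ψ:(G,X)→(G,K) be a dynamical morphism onto an abelian group t.d.s. (G,K). Then ψ(x) = ψ(y) for every (x,y) ∈ NRP^[1](X); consequently the quotient of X by NRP^[1](X) is the maximal abelian group factor of (G,X). -/

import Mathlib

/-- Generators of the Host–Kra cube group: `[h]_F` for `F` a hyperface `{ω : ω i = a}`. -/
def hyperfaceGens (G : Type*) [Group G] (d : ℕ) : Set ((Fin d → Bool) → G) :=
  {g | ∃ (h : G) (i : Fin d) (a : Bool), g = fun ω => if ω i = a then h else 1}

/-- Generators of the face cube group: `[h]_F` for `F` an upper hyperface `{ω : ω i = 1}`. -/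
def upperFaceGens (G : Type*) [Group G] (d : ℕ) : Set ((Fin d → Bool) → G) :=
  {g | ∃ (h : G) (i : Fin d), g = fun ω => if ω i = true then h else 1}

/-- The Host–Kra cube group `HK^[d]`. -/
def HK (G : Type*) [Group G] (d : ℕ) : Subgroup ((Fin d → Bool) → G) :=
  Subgroup.closure (hyperfaceGens G d)

/-- The face cube group `F^[d]`. -/
def FG (G : Type*) [Group G] (d : ℕ) : Subgroup ((Fin d → Bool) → G) :=
  Subgroup.closure (upperFaceGens G d)

/-- Coordinatewise action of `G^[d]` on `X^[d]`. -/
def cubeAct {G X : Type*} [Group G] [MulAction G X] {d : ℕ}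
    (g : (Fin d → Bool) → G) (c : (Fin d → Bool) → X) : (Fin d → Bool) → X :=
  fun ω => g ω • c ω

/-- The dynamical cubespace `C_G^[d](X)`: the closure of the set of `HK^[d]`-translates
of constant configurations. -/
def cubeSpace (G X : Type*) [Group G] [MulAction G X] [TopologicalSpace X] (d : ℕ) :
    Set ((Fin d → Bool) → X) :=
  closure {c | ∃ g ∈ HK G d, ∃ x : X, c = cubeAct g (fun _ => x)}

/-- The lower corner `⌞^[d](x,y)`: value `y` at `1⃗`, value `x` elsewhere. -/
def lowerCorner {X : Type*} (d : ℕ) (x y : X) : (Fin d → Bool) → X :=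
  fun ω => if ω = (fun _ => true) then y else x

/-- The upper corner `⌝^[d](x,y)`: value `x` at `0⃗`, value `y` elsewhere. -/
def upperCorner {X : Type*} (d : ℕ) (x y : X) : (Fin d → Bool) → X :=
  fun ω => if ω = (fun _ => false) then x else y

/-- The nilpotent regionally proximal relation of order `d`. -/
def NRP (G X : Type*) [Group G] [MulAction G X] [TopologicalSpace X] (d : ℕ) :
    Set (X × X) :=
  {p | lowerCorner (d + 1) p.1 p.2 ∈ cubeSpace G X (d + 1)}

/-- `Y_x^[d](X)`: the closure of the `F^[d]`-orbit of the constant configuration `x^[d]`. -/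
def Yx (G : Type*) {X : Type*} [Group G] [MulAction G X] [TopologicalSpace X]
    (d : ℕ) (x : X) : Set ((Fin d → Bool) → X) :=
  closure {c | ∃ f ∈ FG G d, c = cubeAct f (fun _ => x)}

/-- `C_x^[d](X)`: cubes whose value at `0⃗` is `x`. -/
def Cx (G : Type*) {X : Type*} [Group G] [MulAction G X] [TopologicalSpace X]
    (d : ℕ) (x : X) : Set ((Fin d → Bool) → X) :=
  {c ∈ cubeSpace G X d | c (fun _ => false) = x}


/-- Any factor map from a minimal system onto an abelian group t.d.s. collapses
`NRP^[1](X)`; consequently `X/NRP^[1](X)` is the maximal abelian group factor. -/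
theorem NRP_one_collapsed_by_abelian_factor
    {G X : Type*} [Group G] [TopologicalSpace G] [IsTopologicalGroup G]
    [TopologicalSpace X] [CompactSpace X] [T2Space X]
    [MulAction G X] [ContinuousSMul G X]
    {K : Type*} [AddCommGroup K] [TopologicalSpace K] [IsTopologicalAddGroup K]
    [CompactSpace K] [T2Space K]
    [MulAction G K] [ContinuousSMul G K]
    (hmin : ∀ x : X, Dense (MulAction.orbit G x))
    (φ : G → K) (hhom : ∀ g h : G, φ (g * h) = φ g + φ h)
    (hφcont : Continuous φ)
    (hact : ∀ (g : G) (k : K), g • k = φ g + k)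
    (ψ : X → K) (hcont : Continuous ψ) (hsurj : Function.Surjective ψ)
    (hequiv : ∀ (g : G) (x : X), ψ (g • x) = g • ψ x) :
    ∀ x y : X, (x, y) ∈ NRP G X 1 → ψ x = ψ y := by
  intro x y hxy
  have hφ1 : φ 1 = 0 := by
    have h := hhom 1 1
    rw [one_mul] at h
    exact (add_left_cancel (h.symm.trans (add_zero (φ 1)).symm))
  have hinv : ∀ u : G, φ u⁻¹ = -φ u := by
    intro u
    have h := hhom u u⁻¹
    rw [mul_inv_cancel, hφ1] at h
    exact eq_neg_of_add_eq_zero_right h.symm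
  -- the alternating sum functional on group configurations
  set Φ : ((Fin 2 → Bool) → G) → K :=
    fun g => φ (g ![false, false]) - φ (g ![false, true]) - φ (g ![true, false])
      + φ (g ![true, true]) with hΦ
  have hΦHK : ∀ g ∈ HK G 2, Φ g = 0 := by
    intro g hg
    induction hg using Subgroup.closure_induction with
    | mem g hg =>
      obtain ⟨h, i, a, rfl⟩ := hg
      fin_cases i <;> rcases a <;> simp [hΦ, hφ1] <;> abel
    | one => simp [hΦ, hφ1]
    | mul g₁ g₂ _ _ h₁ h₂ =>
      have hm : Φ (g₁ * g₂) = Φ g₁ + Φ g₂ := by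
        simp only [hΦ, Pi.mul_apply, hhom]
        abel
      rw [hm, h₁, h₂, add_zero]
    | inv g _ h =>
      have hi : Φ g⁻¹ = -Φ g := by
        simp only [hΦ, Pi.inv_apply, hinv]
        abel
      rw [hi, h, neg_zero]
  -- the alternating sum functional on cubes
  set F : ((Fin 2 → Bool) → X) → K :=
    fun c => ψ (c ![false, false]) - ψ (c ![false, true]) - ψ (c ![true, false])
      + ψ (c ![true, true]) with hF
  have hFcont : Continuous F := by
    apply Continuous.add
    apply Continuous.sub
    apply Continuous.sub
    all_goals exact hcont.comp (continuous_apply _)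
  have hψg : ∀ (g : G) (z : X), ψ (g • z) = φ g + ψ z := by
    intro g z
    rw [hequiv, hact]
  have hF0 : ∀ c ∈ {c | ∃ g ∈ HK G 2, ∃ z : X, c = cubeAct g (fun _ => z)}, F c = 0 := by
    rintro c ⟨g, hg, z, rfl⟩
    have : F (cubeAct g fun _ => z) = Φ g := by
      simp only [hF, hΦ, cubeAct, hψg]
      abel
    rw [this, hΦHK g hg]
  have hclosed : IsClosed {c : (Fin 2 → Bool) → X | F c = 0} :=
    isClosed_eq hFcont continuous_const
  have hsub : cubeSpace G X 2 ⊆ {c | F c = 0} :=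
    closure_minimal hF0 hclosed
  have hmem : F (lowerCorner 2 x y) = 0 := hsub hxy
  have hv1 : (![true, true] : Fin 2 → Bool) = (fun _ => true) := by
    funext i; fin_cases i <;> rfl
  have hv2 : (![false, false] : Fin 2 → Bool) ≠ (fun _ => true) := by
    intro h; have := congrFun h 0; simp at this
  have hv3 : (![false, true] : Fin 2 → Bool) ≠ (fun _ => true) := by
    intro h; have := congrFun h 0; simp at this
  have hv4 : (![true, false] : Fin 2 → Bool) ≠ (fun _ => true) := by
    intro h; have := congrFun h 1; simp at this
  simp only [hF, lowerCorner, hv1, if_pos rfl, if_neg hv2, if_neg hv3, if_neg hv4] at hmem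
  have : ψ y - ψ x = 0 := by rw [← hmem, if_pos trivial]; abel
  exact (sub_eq_zero.mp this).symm
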